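/- Let C denote the Cartan matrix of the root system E₈ (Mathlib's CartanMatrix.E₈). Let G₁ be the 10×10 block-diagonal integer matrix with blocks [[0,2],[2,0]] and -2·C (the Gram matrix of the lattice U(2) ⊕ E₈(-2)), and let G₂ be the 10×10 block-diagonal integer matrix with blocks [[0,1],[1,0]] and -2·C (the Gram matrix of the lattice U ⊕ E₈(-2)). Then there is no injective ℤ-linear map φ : ℤ^10 → ℤ^10 with torsion-free cokernel such that (φx)ᵀ G₂ (φy) = xᵀ G₁ y for all x, y ∈ ℤ^10; that is, U(2) ⊕ E₈(-2) admits no primitive embedding into U ⊕ E₈(-2). -/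

import Mathlib

open Matrix

/-- The Gram matrix of the lattice `U(2) ⊕ E₈(-2)`: block-diagonal with blocks `[[0,2],[2,0]]`
and `-2` times the `E₈` Cartan matrix. -/
def GramU2E8m2 : Matrix (Fin 2 ⊕ Fin 8) (Fin 2 ⊕ Fin 8) ℤ :=
  Matrix.fromBlocks !![0, 2; 2, 0] 0 0 ((-2 : ℤ) • CartanMatrix.E₈)

/-- The Gram matrix of the lattice `U ⊕ E₈(-2)`: block-diagonal with blocks `[[0,1],[1,0]]`
and `-2` times the `E₈` Cartan matrix. -/
def GramUE8m2 : Matrix (Fin 2 ⊕ Fin 8) (Fin 2 ⊕ Fin 8) ℤ :=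
  Matrix.fromBlocks !![0, 1; 1, 0] 0 0 ((-2 : ℤ) • CartanMatrix.E₈)

lemma gramU2_even : ∀ i j, (2 : ℤ) ∣ GramU2E8m2 i j := by
  intro i j
  rcases i with i|i <;> rcases j with j|j <;> fin_cases i <;> fin_cases j <;> decide

lemma gramU2_pairing_even (x y : (Fin 2 ⊕ Fin 8) → ℤ) :
    (2 : ℤ) ∣ x ⬝ᵥ (GramU2E8m2 *ᵥ y) := by
  unfold dotProduct Matrix.mulVec dotProduct
  refine Finset.dvd_sum fun i _ => ?_
  refine Dvd.dvd.mul_left (Finset.dvd_sum fun j _ => ?_) _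
  exact Dvd.dvd.mul_right (gramU2_even i j) _

/-- The lattice `U(2) ⊕ E₈(-2)` admits no primitive embedding into `U ⊕ E₈(-2)`: there is no
injective `ℤ`-linear map with torsion-free cokernel transforming the one Gram matrix into the
other. -/
theorem no_primitive_embedding_U2E8m2_into_UE8m2 :
    ¬ ∃ φ : ((Fin 2 ⊕ Fin 8) → ℤ) →ₗ[ℤ] ((Fin 2 ⊕ Fin 8) → ℤ),
      Function.Injective φ ∧
      NoZeroSMulDivisors ℤ (((Fin 2 ⊕ Fin 8) → ℤ) ⧸ LinearMap.range φ) ∧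
      ∀ x y : (Fin 2 ⊕ Fin 8) → ℤ, φ x ⬝ᵥ (GramUE8m2 *ᵥ φ y) = x ⬝ᵥ (GramU2E8m2 *ᵥ y) := by
  rintro ⟨φ, hinj, htf, hpair⟩
  -- φ is surjective: the quotient is finitely generated, torsion-free, of rank 0, hence trivial.
  have hrange : Module.finrank ℤ (LinearMap.range φ) =
      Module.finrank ℤ ((Fin 2 ⊕ Fin 8) → ℤ) :=
    LinearMap.finrank_range_of_inj hinj
  have hadd := Submodule.finrank_quotient_add_finrank (LinearMap.range φ)
  have hq0 : Module.finrank ℤ (((Fin 2 ⊕ Fin 8) → ℤ) ⧸ LinearMap.range φ) = 0 := by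
    omega
  have hsub : Subsingleton (((Fin 2 ⊕ Fin 8) → ℤ) ⧸ LinearMap.range φ) :=
    Module.finrank_zero_iff.mp hq0
  have htop : LinearMap.range φ = ⊤ :=
    Submodule.Quotient.subsingleton_iff.mp hsub
  have hsurj : Function.Surjective φ := LinearMap.range_eq_top.mp htop
  obtain ⟨x, hx⟩ := hsurj (Pi.single (Sum.inl 0) 1)
  obtain ⟨y, hy⟩ := hsurj (Pi.single (Sum.inl 1) 1)
  have h := hpair x y
  rw [hx, hy] at h
  have hlhs : Pi.single (Sum.inl 0) (1:ℤ) ⬝ᵥ (GramUE8m2 *ᵥ Pi.single (Sum.inl 1) 1) = 1 := by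
    rw [Matrix.mulVec_single, single_dotProduct]
    show 1 * (GramUE8m2 (Sum.inl 0) (Sum.inl 1) * 1) = 1
    norm_num [GramUE8m2]
  rw [hlhs] at h
  obtain ⟨k, hk⟩ := gramU2_pairing_even x y
  omega
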